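/- The Stone space of the Boolean algebra 𝔄 generated by the chain {P_x : x ∈ (0,1)} together with the identification of ultrafilters with intervals is homeomorphic to the double arrow space 𝕊 = ((0,1] × {0}) ∪ ([0,1) × {1}) with the order topology of the lexicographic order. -/

import Mathlib

open Set

/-- The Boolean algebra of subsets of `α` generated by a family `G`. -/
def genBoolAlg {α : Type*} (G : Set (Set α)) : Set (Set α) :=
  ⋂₀ {𝔅 : Set (Set α) | G ⊆ 𝔅 ∧ ∅ ∈ 𝔅 ∧ (∀ a ∈ 𝔅, aᶜ ∈ 𝔅) ∧
    ∀ a ∈ 𝔅, ∀ b ∈ 𝔅, a ∪ b ∈ 𝔅}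

/-- `F` is an ultrafilter on the algebra `𝔄` of subsets of `α`. -/
def IsUltrafilterOn {α : Type*} (𝔄 F : Set (Set α)) : Prop :=
  F ⊆ 𝔄 ∧ ∅ ∉ F ∧ (∀ a ∈ F, ∀ b ∈ F, a ∩ b ∈ F) ∧
  (∀ a ∈ F, ∀ b ∈ 𝔄, a ⊆ b → b ∈ F) ∧ ∀ a ∈ 𝔄, a ∈ F ∨ aᶜ ∈ F

/-- The Stone space of an algebra `𝔄` of subsets of `α`: ultrafilters on `𝔄`. -/
def StoneSpaceOfAlg {α : Type*} (𝔄 : Set (Set α)) : Type _ :=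
  {F : Set (Set α) // IsUltrafilterOn 𝔄 F}

/-- The Stone topology, generated by the sets `{F : a ∈ F}` for `a ∈ 𝔄`. -/
instance {α : Type*} (𝔄 : Set (Set α)) : TopologicalSpace (StoneSpaceOfAlg 𝔄) :=
  TopologicalSpace.generateFrom
    {s | ∃ a ∈ 𝔄, s = {F : StoneSpaceOfAlg 𝔄 | a ∈ F.1}}

/-- The double arrow space `𝕊 = ((0,1] × {0}) ∪ ([0,1) × {1})`, as a subset of
`ℝ ×ₗ Bool` with the lexicographic order. -/
def DoubleArrow : Type :=
  {p : ℝ ×ₗ Bool // ((ofLex p).2 = false ∧ (ofLex p).1 ∈ Set.Ioc (0:ℝ) 1) ∨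
    ((ofLex p).2 = true ∧ (ofLex p).1 ∈ Set.Ico (0:ℝ) 1)}

noncomputable instance : LinearOrder DoubleArrow := by unfold DoubleArrow; infer_instance

/-- The double arrow space carries the order topology. -/
noncomputable instance : TopologicalSpace DoubleArrow := Preorder.topology DoubleArrow

instance : OrderTopology DoubleArrow := ⟨rfl⟩

namespace Stmt15Aux

lemma gen_subset {α : Type*} {G S : Set (Set α)} (h1 : G ⊆ S) (h2 : ∅ ∈ S)
    (h3 : ∀ a ∈ S, aᶜ ∈ S) (h4 : ∀ a ∈ S, ∀ b ∈ S, a ∪ b ∈ S) :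
    genBoolAlg G ⊆ S :=
  sInter_subset_of_mem ⟨h1, h2, h3, h4⟩

lemma subset_gen {α : Type*} {G : Set (Set α)} : G ⊆ genBoolAlg G :=
  fun a ha => by intro S hS; exact hS.1 ha

lemma empty_mem_gen {α : Type*} {G : Set (Set α)} : ∅ ∈ genBoolAlg G :=
  fun S hS => hS.2.1

lemma compl_mem_gen {α : Type*} {G : Set (Set α)} {a : Set α} (ha : a ∈ genBoolAlg G) :
    aᶜ ∈ genBoolAlg G :=
  fun S hS => hS.2.2.1 a (ha S hS) 

lemma union_mem_gen {α : Type*} {G : Set (Set α)} {a b : Set α} (ha : a ∈ genBoolAlg G)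
    (hb : b ∈ genBoolAlg G) : a ∪ b ∈ genBoolAlg G :=
  fun S hS => hS.2.2.2 a (ha S hS) b (hb S hS)

lemma inter_mem_gen {α : Type*} {G : Set (Set α)} {a b : Set α} (ha : a ∈ genBoolAlg G)
    (hb : b ∈ genBoolAlg G) : a ∩ b ∈ genBoolAlg G := by
  have := compl_mem_gen (union_mem_gen (compl_mem_gen ha) (compl_mem_gen hb))
  simpa [compl_union] using this

section UF
variable {α : Type*} {𝔄 F : Set (Set α)} (hF : IsUltrafilterOn 𝔄 F)

include hF

lemma uf_compl_iff {a : Set α} (ha : a ∈ 𝔄) : aᶜ ∈ F ↔ a ∉ F := by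
  constructor
  · intro hc haF
    have := hF.2.2.1 a haF aᶜ hc
    rw [inter_compl_self] at this
    exact hF.2.1 this
  · intro haF
    rcases hF.2.2.2.2 a ha with h | h
    · exact absurd h haF
    · exact h

lemma uf_union_iff {a b : Set α} (ha : a ∈ 𝔄) (hb : b ∈ 𝔄) (hab : a ∪ b ∈ 𝔄) :
    a ∪ b ∈ F ↔ a ∈ F ∨ b ∈ F := by
  constructor
  · intro h
    by_contra hc
    push_neg at hc
    have ha' : aᶜ ∈ F := (uf_compl_iff hF ha).2 hc.1
    have hb' : bᶜ ∈ F := (uf_compl_iff hF hb).2 hc.2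
    have h1 := hF.2.2.1 _ ha' _ hb'
    have h2 := hF.2.2.1 _ h _ h1
    rw [← compl_union, inter_compl_self] at h2
    exact hF.2.1 h2
  · rintro (h | h)
    · exact hF.2.2.2.1 a h _ hab subset_union_left
    · exact hF.2.2.2.1 b h _ hab subset_union_right

end UF
end Stmt15Aux

namespace Stmt15Aux

def yc (p : DoubleArrow) : ℝ := (ofLex p.1).1
def bc (p : DoubleArrow) : Bool := (ofLex p.1).2

lemma yc_false {p : DoubleArrow} (h : bc p = false) : yc p ∈ Ioc (0:ℝ) 1 := by
  rcases p.2 with h' | h'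
  · exact h'.2
  · rw [bc, h'.1] at h; cases h

lemma yc_true {p : DoubleArrow} (h : bc p = true) : yc p ∈ Ico (0:ℝ) 1 := by
  rcases p.2 with h' | h'
  · rw [bc, h'.1] at h; cases h
  · exact h'.2

lemma yc_nonneg (p : DoubleArrow) : 0 ≤ yc p := by
  cases hb : bc p
  · exact (yc_false hb).1.le
  · exact (yc_true hb).1

lemma yc_le_one (p : DoubleArrow) : yc p ≤ 1 := by
  cases hb : bc p
  · exact (yc_false hb).2
  · exact (yc_true hb).2.le

def tailSet (p : DoubleArrow) (ε : ℝ) : Set ℝ :=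
  if bc p = false then Ioo (yc p - ε) (yc p) else Ioo (yc p) (yc p + ε)

lemma tailSet_mono {p : DoubleArrow} {ε ε' : ℝ} (h : ε ≤ ε') :
    tailSet p ε ⊆ tailSet p ε' := by
  unfold tailSet
  split
  · exact Ioo_subset_Ioo (by linarith) le_rfl
  · exact Ioo_subset_Ioo le_rfl (by linarith)

variable (Q : Set ℝ)

def memF (p : DoubleArrow) (a : Set ↥Q) : Prop :=
  ∃ ε : ℝ, 0 < ε ∧ ∀ q : ↥Q, (q : ℝ) ∈ tailSet p ε → q ∈ a

variable {Q}

lemma memF_mono {p : DoubleArrow} {a b : Set ↥Q} (hab : a ⊆ b) (h : memF Q p a) :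
    memF Q p b := by
  obtain ⟨ε, hε, hq⟩ := h
  exact ⟨ε, hε, fun q hq' => hab (hq q hq')⟩

lemma memF_inter {p : DoubleArrow} {a b : Set ↥Q} (ha : memF Q p a) (hb : memF Q p b) :
    memF Q p (a ∩ b) := by
  obtain ⟨ε, hε, hq⟩ := ha
  obtain ⟨ε', hε', hq'⟩ := hb
  refine ⟨min ε ε', lt_min hε hε', fun q hqm => ?_⟩
  exact ⟨hq q (tailSet_mono (min_le_left _ _) hqm), hq' q (tailSet_mono (min_le_right _ _) hqm)⟩

lemma memF_univ (p : DoubleArrow) : memF Q p univ :=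
  ⟨1, one_pos, fun _ _ => trivial⟩

section Dense
variable (hQdense : ∀ a b : ℝ, 0 ≤ a → a < b → b ≤ 1 → ∃ q ∈ Q, a < q ∧ q < b)
include hQdense

lemma tail_exists_gt (p : DoubleArrow) {ε x : ℝ} (hε : 0 < ε) (hx : 0 ≤ x)
    (h : if bc p = false then x < yc p else x ≤ yc p) :
    ∃ q ∈ Q, q ∈ tailSet p ε ∧ x < q := by
  cases hb : bc p with
  | false =>
    rw [hb] at h; simp only [if_true] at h
    obtain ⟨q, hqQ, hq1, hq2⟩ := hQdense (max (yc p - ε) x) (yc p)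
      (le_trans hx (le_max_right _ _)) (max_lt (by linarith) h) (yc_false hb).2
    refine ⟨q, hqQ, ?_, lt_of_le_of_lt (le_max_right _ _) hq1⟩
    simp only [tailSet, hb, if_true, mem_Ioo]
    exact ⟨lt_of_le_of_lt (le_max_left _ _) hq1, hq2⟩
  | true =>
    rw [hb] at h; simp only [Bool.true_eq_false, if_false] at h
    have hy := yc_true hb
    obtain ⟨q, hqQ, hq1, hq2⟩ := hQdense (yc p) (min (yc p + ε) 1) hy.1
      (lt_min (by linarith) hy.2) (min_le_right _ _)
    refine ⟨q, hqQ, ?_, lt_of_le_of_lt h hq1⟩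
    simp only [tailSet, hb, Bool.true_eq_false, if_false, mem_Ioo]
    exact ⟨hq1, lt_of_lt_of_le hq2 (min_le_left _ _)⟩

lemma tail_exists (p : DoubleArrow) {ε : ℝ} (hε : 0 < ε) :
    ∃ q ∈ Q, q ∈ tailSet p ε := by
  obtain ⟨q, hqQ, hqt, _⟩ := tail_exists_gt hQdense p hε le_rfl (by
    cases hb : bc p
    · simp only [if_true]; exact (yc_false hb).1
    · simp only [Bool.true_eq_false, if_false]; exact (yc_true hb).1)
  exact ⟨q, hqQ, hqt⟩

variable {P : ℝ → Set ↥Q} (hP : ∀ x : ℝ, P x = {q : ↥Q | (q : ℝ) ≤ x})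
include hP

lemma memF_P_of {p : DoubleArrow} {x : ℝ}
    (h : if bc p = false then yc p ≤ x else yc p < x) : memF Q p (P x) := by
  cases hb : bc p with
  | false =>
    rw [hb] at h; simp only [if_true] at h
    exact ⟨1, one_pos, fun q hq => by
      rw [hP]; simp only [tailSet, hb, if_true, mem_Ioo] at hq ⊢
      exact le_trans hq.2.le h⟩
  | true =>
    rw [hb] at h; simp only [Bool.true_eq_false, if_false] at h
    refine ⟨x - yc p, by linarith, fun q hq => by
      rw [hP]
      simp only [tailSet, hb, Bool.true_eq_false, if_false, mem_Ioo] at hq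
      simp only [mem_setOf_eq]
      linarith [hq.2]⟩

lemma memF_P_compl_of {p : DoubleArrow} {x : ℝ} (hx : 0 ≤ x)
    (h : if bc p = false then x < yc p else x ≤ yc p) : memF Q p (P x)ᶜ := by
  cases hb : bc p with
  | false =>
    rw [hb] at h; simp only [if_true] at h
    refine ⟨yc p - x, by linarith, fun q hq => by
      rw [hP]; simp only [tailSet, hb, if_true, mem_Ioo] at hq
      simp only [mem_compl_iff, mem_setOf_eq, not_le]
      linarith [hq.1]⟩
  | true =>
    rw [hb] at h; simp only [Bool.true_eq_false, if_false] at h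
    refine ⟨1, one_pos, fun q hq => by
      rw [hP]; simp only [tailSet, hb, Bool.true_eq_false, if_false, mem_Ioo] at hq
      simp only [mem_compl_iff, mem_setOf_eq, not_le]
      linarith [hq.1]⟩

lemma memF_P_iff {p : DoubleArrow} {x : ℝ} (hx : x ∈ Ioo (0:ℝ) 1) :
    memF Q p (P x) ↔ (if bc p = false then yc p ≤ x else yc p < x) := by
  constructor
  · intro hm
    by_contra hc
    obtain ⟨ε, hε, hq⟩ := hm
    have h' : if bc p = false then x < yc p else x ≤ yc p := by
      cases hb : bc p <;> rw [hb] at hc <;> simpa using hc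
    obtain ⟨q, hqQ, hqt, hqx⟩ := tail_exists_gt hQdense p hε hx.1.le h'
    have := hq ⟨q, hqQ⟩ hqt
    rw [hP] at this
    exact absurd this (by simp only [mem_setOf_eq, not_le]; exact hqx)
  · exact memF_P_of hQdense hP

end Dense
end Stmt15Aux

namespace Stmt15Aux
open Set

variable {Q : Set ℝ}

variable (Q) in
def UF (𝔄 : Set (Set ↥Q)) (p : DoubleArrow) : Set (Set ↥Q) := {a ∈ 𝔄 | memF Q p a}

section Main
variable (hQdense : ∀ a b : ℝ, 0 ≤ a → a < b → b ≤ 1 → ∃ q ∈ Q, a < q ∧ q < b)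
  {P : ℝ → Set ↥Q} (hP : ∀ x : ℝ, P x = {q : ↥Q | (q : ℝ) ≤ x})
include hQdense hP

lemma memF_dichotomy (p : DoubleArrow) {a : Set ↥Q}
    (ha : a ∈ genBoolAlg {s | ∃ x ∈ Ioo (0:ℝ) 1, s = P x}) :
    memF Q p a ∨ memF Q p aᶜ := by
  refine gen_subset (S := {a : Set ↥Q | memF Q p a ∨ memF Q p aᶜ}) ?_ ?_ ?_ ?_ ha
  · rintro s ⟨x, hx, rfl⟩
    cases hb : bc p with
    | false =>
      rcases le_or_gt (yc p) x with h | h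
      · exact Or.inl (memF_P_of hQdense hP (by rw [hb]; simpa using h))
      · exact Or.inr (memF_P_compl_of hQdense hP hx.1.le (by rw [hb]; simpa using h))
    | true =>
      rcases le_or_gt x (yc p) with h | h
      · exact Or.inr (memF_P_compl_of hQdense hP hx.1.le (by rw [hb]; simpa using h))
      · exact Or.inl (memF_P_of hQdense hP (by rw [hb]; simpa using h))
  · exact Or.inr (by rw [compl_empty]; exact memF_univ _)
  · rintro a (h | h)
    · exact Or.inr (by rw [compl_compl]; exact h)
    · exact Or.inl h
  · rintro a (ha' | ha') b (hb' | hb')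
    · exact Or.inl (memF_mono subset_union_left ha')
    · exact Or.inl (memF_mono subset_union_left ha')
    · exact Or.inl (memF_mono subset_union_right hb')
    · exact Or.inr (by rw [compl_union]; exact memF_inter ha' hb')

lemma UF_ultra {𝔄 : Set (Set ↥Q)}
    (h𝔄 : 𝔄 = genBoolAlg {s | ∃ x ∈ Ioo (0:ℝ) 1, s = P x}) (p : DoubleArrow) :
    IsUltrafilterOn 𝔄 (UF Q 𝔄 p) := by
  subst h𝔄
  refine ⟨fun a ha => ha.1, ?_, ?_, ?_, ?_⟩
  · rintro ⟨-, ε, hε, hq⟩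
    obtain ⟨q, hqQ, hqt⟩ := tail_exists hQdense p hε
    exact hq ⟨q, hqQ⟩ hqt
  · rintro a ⟨ha, hma⟩ b ⟨hb, hmb⟩
    exact ⟨inter_mem_gen ha hb, memF_inter hma hmb⟩
  · rintro a ⟨ha, hma⟩ b hb hab
    exact ⟨hb, memF_mono hab hma⟩
  · intro a ha
    rcases memF_dichotomy hQdense hP p ha with h | h
    · exact Or.inl ⟨ha, h⟩
    · exact Or.inr ⟨compl_mem_gen ha, h⟩

end Main

def pt (x : ℝ) (hx : x ∈ Ioo (0:ℝ) 1) : DoubleArrow :=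
  ⟨toLex (x, false), Or.inl ⟨rfl, hx.1, hx.2.le⟩⟩

def pt' (x : ℝ) (hx : x ∈ Ioo (0:ℝ) 1) : DoubleArrow :=
  ⟨toLex (x, true), Or.inr ⟨rfl, hx.1.le, hx.2⟩⟩

lemma da_le_iff {p q : DoubleArrow} :
    p ≤ q ↔ yc p < yc q ∨ (yc p = yc q ∧ bc p ≤ bc q) :=
  Subtype.coe_le_coe.symm.trans Prod.Lex.le_iff

lemma da_lt_iff {p q : DoubleArrow} :
    p < q ↔ yc p < yc q ∨ (yc p = yc q ∧ bc p < bc q) :=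
  Subtype.coe_lt_coe.symm.trans Prod.Lex.lt_iff

lemma le_pt_iff {p : DoubleArrow} {x : ℝ} (hx : x ∈ Ioo (0:ℝ) 1) :
    p ≤ pt x hx ↔ (if bc p = false then yc p ≤ x else yc p < x) := by
  rw [da_le_iff]
  have h1 : yc (pt x hx) = x := rfl
  have h2 : bc (pt x hx) = false := rfl
  rw [h1, h2]
  cases hb : bc p <;> simp [hb, le_iff_lt_or_eq]

lemma lt_pt'_iff {p : DoubleArrow} {x : ℝ} (hx : x ∈ Ioo (0:ℝ) 1) :
    p < pt' x hx ↔ (if bc p = false then yc p ≤ x else yc p < x) := by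
  rw [da_lt_iff]
  have h1 : yc (pt' x hx) = x := rfl
  have h2 : bc (pt' x hx) = true := rfl
  rw [h1, h2]
  cases hb : bc p <;> simp [hb, le_iff_lt_or_eq, Bool.lt_iff]

lemma Iic_pt_eq {x : ℝ} (hx : x ∈ Ioo (0:ℝ) 1) : Iic (pt x hx) = Iio (pt' x hx) := by
  ext p
  rw [mem_Iic, mem_Iio, le_pt_iff hx, lt_pt'_iff hx]

end Stmt15Aux

namespace Stmt15Aux
open Set TopologicalSpace

variable {Q : Set ℝ}

section Main2
variable (hQdense : ∀ a b : ℝ, 0 ≤ a → a < b → b ≤ 1 → ∃ q ∈ Q, a < q ∧ q < b)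
  {P : ℝ → Set ↥Q} (hP : ∀ x : ℝ, P x = {q : ↥Q | (q : ℝ) ≤ x})
include hQdense

omit hQdense in
lemma not_memF_empty' (hne : ∀ ε : ℝ, 0 < ε → ∃ q ∈ Q, q ∈ tailSet p ε) :
    ¬ memF Q p (∅ : Set ↥Q) := by
  rintro ⟨ε, hε, hq⟩
  obtain ⟨q, hqQ, hqt⟩ := hne ε hε
  exact hq ⟨q, hqQ⟩ hqt

lemma not_memF_empty (p : DoubleArrow) : ¬ memF Q p (∅ : Set ↥Q) :=
  not_memF_empty' (fun _ hε => tail_exists hQdense p hε)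

include hP

lemma memF_compl_iff (p : DoubleArrow) {a : Set ↥Q}
    (ha : a ∈ genBoolAlg {s | ∃ x ∈ Ioo (0:ℝ) 1, s = P x}) :
    memF Q p aᶜ ↔ ¬ memF Q p a := by
  constructor
  · intro hc hm
    have := memF_inter hm hc
    rw [inter_compl_self] at this
    exact not_memF_empty hQdense p this
  · intro hm
    rcases memF_dichotomy hQdense hP p ha with h | h
    · exact absurd h hm
    · exact h

lemma memF_union_iff (p : DoubleArrow) {a b : Set ↥Q}
    (ha : a ∈ genBoolAlg {s | ∃ x ∈ Ioo (0:ℝ) 1, s = P x}) :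
    memF Q p (a ∪ b) ↔ memF Q p a ∨ memF Q p b := by
  constructor
  · intro h
    rcases memF_dichotomy hQdense hP p ha with h' | h'
    · exact Or.inl h'
    · refine Or.inr (memF_mono ?_ (memF_inter h h'))
      rintro q ⟨hq1 | hq1, hq2⟩
      · exact absurd hq1 hq2
      · exact hq1
  · rintro (h | h)
    · exact memF_mono subset_union_left h
    · exact memF_mono subset_union_right h

variable {𝔄 : Set (Set ↥Q)} (h𝔄 : 𝔄 = genBoolAlg {s | ∃ x ∈ Ioo (0:ℝ) 1, s = P x})
include h𝔄

lemma mem_UF_P_iff (p : DoubleArrow) {x : ℝ} (hx : x ∈ Ioo (0:ℝ) 1) :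
    P x ∈ UF Q 𝔄 p ↔ p ≤ pt x hx := by
  constructor
  · rintro ⟨-, hm⟩
    exact (le_pt_iff hx).2 ((memF_P_iff hQdense hP hx).1 hm)
  · intro h
    exact ⟨h𝔄 ▸ subset_gen ⟨x, hx, rfl⟩,
      memF_P_of hQdense hP ((le_pt_iff hx).1 h)⟩

lemma trace_UF (p : DoubleArrow) :
    {x ∈ Ioo (0:ℝ) 1 | P x ∈ UF Q 𝔄 p} =
      (if bc p = false then Ico (yc p) 1 else Ioo (yc p) 1) ∩ Ioo 0 1 := by
  ext x
  simp only [mem_sep_iff, mem_inter_iff]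
  constructor
  · rintro ⟨hx, -, hm⟩
    have hc := (memF_P_iff hQdense hP hx).1 hm
    refine ⟨?_, hx⟩
    cases hb : bc p with
    | false =>
      rw [hb] at hc
      rw [if_pos rfl] at hc ⊢
      exact ⟨hc, hx.2⟩
    | true =>
      rw [hb] at hc
      rw [if_neg (by simp)] at hc ⊢
      exact ⟨hc, hx.2⟩
  · rintro ⟨hif, hx⟩
    refine ⟨hx, h𝔄 ▸ subset_gen ⟨x, hx, rfl⟩, memF_P_of hQdense hP ?_⟩
    cases hb : bc p with
    | false =>
      rw [hb] at hif
      rw [if_pos rfl] at hif ⊢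
      exact hif.1
    | true =>
      rw [hb] at hif
      rw [if_neg (by simp)] at hif ⊢
      exact hif.1

end Main2

@[simp] lemma yc_pt {x : ℝ} (hx : x ∈ Ioo (0:ℝ) 1) : yc (pt x hx) = x := rfl
@[simp] lemma bc_pt {x : ℝ} (hx : x ∈ Ioo (0:ℝ) 1) : bc (pt x hx) = false := rfl
@[simp] lemma yc_pt' {x : ℝ} (hx : x ∈ Ioo (0:ℝ) 1) : yc (pt' x hx) = x := rfl
@[simp] lemma bc_pt' {x : ℝ} (hx : x ∈ Ioo (0:ℝ) 1) : bc (pt' x hx) = true := rfl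

lemma exists_pt_between {p q : DoubleArrow} (h : p < q) :
    ∃ x : ℝ, ∃ hx : x ∈ Ioo (0:ℝ) 1, p ≤ pt x hx ∧ pt x hx < q := by
  rw [da_lt_iff] at h
  rcases h with h | ⟨hy, hb⟩
  · have h0 : 0 ≤ yc p := yc_nonneg p
    have h1 : yc q ≤ 1 := yc_le_one q
    refine ⟨(yc p + yc q) / 2, (show (yc p + yc q) / 2 ∈ Ioo (0:ℝ) 1 from ⟨by linarith, by linarith⟩), ?_, ?_⟩
    · exact da_le_iff.2 (Or.inl (by rw [yc_pt]; linarith))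
    · exact da_lt_iff.2 (Or.inl (by rw [yc_pt]; linarith))
  · rw [Bool.lt_iff] at hb
    have hx : yc p ∈ Ioo (0:ℝ) 1 := ⟨(yc_false hb.1).1, hy ▸ (yc_true hb.2).2⟩
    refine ⟨yc p, hx, ?_, ?_⟩
    · exact da_le_iff.2 (Or.inr ⟨rfl, by simp [hb.1]⟩)
    · exact da_lt_iff.2 (Or.inr ⟨hy, by simp [hb.2, Bool.lt_iff]⟩)

lemma uf_ext {α : Type*} {G 𝔄 : Set (Set α)} (h𝔄 : 𝔄 = genBoolAlg G) {F F' : Set (Set α)}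
    (hF : IsUltrafilterOn 𝔄 F) (hF' : IsUltrafilterOn 𝔄 F')
    (hG : ∀ s ∈ G, (s ∈ F ↔ s ∈ F')) : F = F' := by
  subst h𝔄
  have key : ∀ a ∈ genBoolAlg G, (a ∈ F ↔ a ∈ F') := by
    intro a ha
    refine (gen_subset (S := {a | a ∈ genBoolAlg G ∧ (a ∈ F ↔ a ∈ F')})
      ?_ ?_ ?_ ?_ ha).2
    · exact fun s hs => ⟨subset_gen hs, hG s hs⟩
    · exact ⟨empty_mem_gen, iff_of_false hF.2.1 hF'.2.1⟩
    · rintro a ⟨ha𝔄, hiff⟩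
      exact ⟨compl_mem_gen ha𝔄, by rw [uf_compl_iff hF ha𝔄, uf_compl_iff hF' ha𝔄, hiff]⟩
    · rintro a ⟨ha𝔄, hiffa⟩ b ⟨hb𝔄, hiffb⟩
      refine ⟨union_mem_gen ha𝔄 hb𝔄, ?_⟩
      rw [uf_union_iff hF ha𝔄 hb𝔄 (union_mem_gen ha𝔄 hb𝔄),
        uf_union_iff hF' ha𝔄 hb𝔄 (union_mem_gen ha𝔄 hb𝔄)]
      exact or_congr hiffa hiffb
  ext a
  constructor
  · intro h; exact (key a (hF.1 h)).1 h
  · intro h; exact (key a (hF'.1 h)).2 h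

end Stmt15Aux

namespace Stmt15Aux
open Set TopologicalSpace

def mkF (x : ℝ) (hx : x ∈ Ioc (0:ℝ) 1) : DoubleArrow := ⟨toLex (x, false), Or.inl ⟨rfl, hx⟩⟩
def mkT (x : ℝ) (hx : x ∈ Ico (0:ℝ) 1) : DoubleArrow := ⟨toLex (x, true), Or.inr ⟨rfl, hx⟩⟩
@[simp] lemma yc_mkF {x hx} : yc (mkF x hx) = x := rfl
@[simp] lemma bc_mkF {x hx} : bc (mkF x hx) = false := rfl
@[simp] lemma yc_mkT {x hx} : yc (mkT x hx) = x := rfl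
@[simp] lemma bc_mkT {x hx} : bc (mkT x hx) = true := rfl

lemma open_basic {α : Type*} {𝔄 : Set (Set α)} {a : Set α} (ha : a ∈ 𝔄) :
    IsOpen {F : StoneSpaceOfAlg 𝔄 | a ∈ F.1} :=
  TopologicalSpace.isOpen_generateFrom_of_mem ⟨a, ha, rfl⟩

lemma closed_basic {α : Type*} {G 𝔄 : Set (Set α)} (h𝔄 : 𝔄 = genBoolAlg G) {a : Set α}
    (ha : a ∈ 𝔄) : IsClosed {F : StoneSpaceOfAlg 𝔄 | a ∈ F.1} := by
  rw [← isOpen_compl_iff]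
  have : {F : StoneSpaceOfAlg 𝔄 | a ∈ F.1}ᶜ = {F : StoneSpaceOfAlg 𝔄 | aᶜ ∈ F.1} := by
    ext F
    simp only [mem_compl_iff, mem_setOf_eq]
    exact (uf_compl_iff F.2 ha).symm
  rw [this]
  exact open_basic (h𝔄 ▸ compl_mem_gen (h𝔄 ▸ ha))

variable {Q : Set ℝ}

section Final
variable (hQdense : ∀ a b : ℝ, 0 ≤ a → a < b → b ≤ 1 → ∃ q ∈ Q, a < q ∧ q < b)
  {P : ℝ → Set ↥Q} (hP : ∀ x : ℝ, P x = {q : ↥Q | (q : ℝ) ≤ x})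
  {𝔄 : Set (Set ↥Q)} (h𝔄 : 𝔄 = genBoolAlg {s | ∃ x ∈ Ioo (0:ℝ) 1, s = P x})
include hQdense hP h𝔄

lemma UF_ne_of_lt {p q : DoubleArrow} (hlt : p < q) : UF Q 𝔄 p ≠ UF Q 𝔄 q := by
  obtain ⟨x, hx, hle, hlt'⟩ := exists_pt_between hlt
  intro h
  have h1 : P x ∈ UF Q 𝔄 p := (mem_UF_P_iff hQdense hP h𝔄 p hx).2 hle
  rw [h] at h1
  exact absurd ((mem_UF_P_iff hQdense hP h𝔄 q hx).1 h1) (not_le_of_gt hlt')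

lemma UF_injective : Function.Injective (fun p : DoubleArrow => UF Q 𝔄 p) := by
  intro p q h
  rcases lt_trichotomy p q with hlt | he | hlt
  · exact absurd h (UF_ne_of_lt hQdense hP h𝔄 hlt)
  · exact he
  · exact absurd h.symm (UF_ne_of_lt hQdense hP h𝔄 hlt)

lemma UF_surjective {F : Set (Set ↥Q)} (hF : IsUltrafilterOn 𝔄 F) :
    ∃ p : DoubleArrow, UF Q 𝔄 p = F := by
  classical
  set I : Set ℝ := {x | x ∈ Ioo (0:ℝ) 1 ∧ P x ∈ F} with hI
  have hIup : ∀ x ∈ I, ∀ x' ∈ Ioo (0:ℝ) 1, x ≤ x' → x' ∈ I := by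
    rintro x ⟨hx, hxF⟩ x' hx' hle
    refine ⟨hx', hF.2.2.2.1 _ hxF _ (h𝔄 ▸ subset_gen ⟨x', hx', rfl⟩) ?_⟩
    rw [hP, hP]
    exact fun q hq => le_trans hq hle
  set y := sInf (insert 1 I) with hy
  have hlb : ∀ z ∈ insert 1 I, (0:ℝ) ≤ z := by
    rintro z (rfl | hz); exacts [zero_le_one, hz.1.1.le]
  have hbdd : BddBelow (insert 1 I) := ⟨0, hlb⟩
  have hne : (insert 1 I).Nonempty := ⟨1, mem_insert _ _⟩
  have hy0 : 0 ≤ y := le_csInf hne hlb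
  have hy1 : y ≤ 1 := csInf_le hbdd (mem_insert _ _)
  have hle_of_mem : ∀ x ∈ I, y ≤ x := fun x hx => csInf_le hbdd (mem_insert_of_mem _ hx)
  by_cases hyI : y ∈ I
  · refine ⟨pt y hyI.1, uf_ext h𝔄 (UF_ultra hQdense hP h𝔄 _) hF ?_⟩
    rintro s ⟨x, hx, rfl⟩
    rw [mem_UF_P_iff hQdense hP h𝔄 _ hx, le_pt_iff hx]
    simp only [bc_pt, yc_pt, if_pos rfl]
    constructor
    · intro hyx
      exact (hIup y hyI x hx hyx).2
    · intro hxF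
      exact hle_of_mem x ⟨hx, hxF⟩
  · rcases eq_or_lt_of_le hy1 with hy1' | hy1'
    · refine ⟨mkF 1 (show (1:ℝ) ∈ Ioc (0:ℝ) 1 from ⟨zero_lt_one, le_rfl⟩), uf_ext h𝔄 (UF_ultra hQdense hP h𝔄 _) hF ?_⟩
      rintro s ⟨x, hx, rfl⟩
      rw [mem_UF_P_iff hQdense hP h𝔄 _ hx, le_pt_iff hx]
      simp only [bc_mkF, yc_mkF, if_pos rfl]
      refine iff_of_false (not_le.2 hx.2) ?_
      intro hxF
      have hxI : x ∈ I := ⟨hx, hxF⟩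
      have := hle_of_mem x hxI
      rw [← hy1'] at hx
      exact absurd this (not_le.2 hx.2)
    · refine ⟨mkT y (Set.mem_Ico.2 ⟨hy0, hy1'⟩), uf_ext h𝔄 (UF_ultra hQdense hP h𝔄 _) hF ?_⟩
      rintro s ⟨x, hx, rfl⟩
      rw [mem_UF_P_iff hQdense hP h𝔄 _ hx, le_pt_iff hx]
      simp only [bc_mkT, yc_mkT]
      show y < x ↔ P x ∈ F
      constructor
      · intro hyx
        obtain ⟨z, hz, hzx⟩ := exists_lt_of_csInf_lt hne (show sInf (insert 1 I) < x from hyx)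
        rcases hz with rfl | hz
        · exact absurd hzx (not_lt.2 hx.2.le)
        · exact (hIup z hz x hx hzx.le).2
      · intro hxF
        have hxI : x ∈ I := ⟨hx, hxF⟩
        exact lt_of_le_of_ne (hle_of_mem x hxI) (fun h => hyI (h ▸ hxI))

lemma memF_clopen {a : Set ↥Q} (ha : a ∈ 𝔄) :
    IsOpen {p : DoubleArrow | memF Q p a} ∧ IsClosed {p : DoubleArrow | memF Q p a} := by
  rw [h𝔄] at ha
  refine (gen_subset (S := {a : Set ↥Q | a ∈ genBoolAlg {s | ∃ x ∈ Ioo (0:ℝ) 1, s = P x} ∧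
    (IsOpen {p : DoubleArrow | memF Q p a} ∧ IsClosed {p : DoubleArrow | memF Q p a})})
    ?_ ?_ ?_ ?_ ha).2
  · rintro s ⟨x, hx, rfl⟩
    have hset : {p : DoubleArrow | memF Q p (P x)} = Iic (pt x hx) := by
      ext p
      rw [mem_setOf_eq, memF_P_iff hQdense hP hx, mem_Iic, le_pt_iff hx]
    refine ⟨subset_gen ⟨x, hx, rfl⟩, ?_, ?_⟩
    · rw [hset, Iic_pt_eq hx]; exact isOpen_Iio
    · rw [hset]; exact isClosed_Iic
  · have hset : {p : DoubleArrow | memF Q p (∅ : Set ↥Q)} = ∅ :=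
      eq_empty_iff_forall_notMem.2 (fun p => not_memF_empty hQdense p)
    exact ⟨empty_mem_gen, by rw [hset]; exact ⟨isOpen_empty, isClosed_empty⟩⟩
  · rintro a ⟨haG, hop, hcl⟩
    have hset : {p : DoubleArrow | memF Q p aᶜ} = {p : DoubleArrow | memF Q p a}ᶜ := by
      ext p
      rw [mem_setOf_eq, mem_compl_iff, mem_setOf_eq, memF_compl_iff hQdense hP p haG]
    exact ⟨compl_mem_gen haG, by rw [hset]; exact ⟨hcl.isOpen_compl, hop.isClosed_compl⟩⟩
  · rintro a ⟨haG, hopa, hcla⟩ b ⟨hbG, hopb, hclb⟩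
    have hset : {p : DoubleArrow | memF Q p (a ∪ b)} =
        {p : DoubleArrow | memF Q p a} ∪ {p : DoubleArrow | memF Q p b} := by
      ext p
      rw [mem_setOf_eq, mem_union, mem_setOf_eq, mem_setOf_eq,
        memF_union_iff hQdense hP p haG]
    exact ⟨union_mem_gen haG hbG, by rw [hset]; exact ⟨hopa.union hopb, hcla.union hclb⟩⟩

variable {f : DoubleArrow → StoneSpaceOfAlg 𝔄} (hf : ∀ p, (f p).1 = UF Q 𝔄 p)
include hf

lemma cont_f : Continuous f := by
  apply continuous_generateFrom_iff.mpr
  rintro s ⟨a, ha, rfl⟩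
  have hpre : f ⁻¹' {F : StoneSpaceOfAlg 𝔄 | a ∈ F.1} = {p : DoubleArrow | memF Q p a} := by
    ext p
    rw [mem_preimage, mem_setOf_eq, mem_setOf_eq, hf p]
    exact ⟨fun h => h.2, fun h => ⟨ha, h⟩⟩
  rw [hpre]
  exact (memF_clopen hQdense hP h𝔄 ha).1

lemma image_Iic_closed (p : DoubleArrow) : IsClosed (f '' Iic p) := by
  have himg : f '' Iic p = {F : StoneSpaceOfAlg 𝔄 | ∀ x : ℝ, ∀ hx : x ∈ Ioo (0:ℝ) 1,
      p ≤ pt x hx → P x ∈ F.1} := by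
    ext F
    constructor
    · rintro ⟨q, hq, rfl⟩ x hx hpx
      rw [hf q]
      exact (mem_UF_P_iff hQdense hP h𝔄 q hx).2 (le_trans hq hpx)
    · intro hF
      obtain ⟨q, hq⟩ := UF_surjective hQdense hP h𝔄 F.2
      refine ⟨q, ?_, Subtype.ext ((hf q).trans hq)⟩
      by_contra hqp
      obtain ⟨x, hx, h1, h2⟩ := exists_pt_between (not_le.1 hqp)
      have hmem := hF x hx h1
      rw [← hq] at hmem
      exact absurd ((mem_UF_P_iff hQdense hP h𝔄 q hx).1 hmem) (not_le.2 h2)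
  have heq : {F : StoneSpaceOfAlg 𝔄 | ∀ x : ℝ, ∀ hx : x ∈ Ioo (0:ℝ) 1,
      p ≤ pt x hx → P x ∈ F.1} = ⋂ (x : ℝ), ⋂ (hx : x ∈ Ioo (0:ℝ) 1),
      ⋂ (_ : p ≤ pt x hx), {F : StoneSpaceOfAlg 𝔄 | P x ∈ F.1} := by
    ext F
    simp only [mem_iInter, mem_setOf_eq]
  rw [himg, heq]
  exact isClosed_iInter fun x => isClosed_iInter fun hx => isClosed_iInter fun _ =>
    closed_basic h𝔄 (h𝔄 ▸ subset_gen ⟨x, hx, rfl⟩)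

lemma image_Ici_closed (p : DoubleArrow) : IsClosed (f '' Ici p) := by
  have himg : f '' Ici p = {F : StoneSpaceOfAlg 𝔄 | ∀ x : ℝ, ∀ hx : x ∈ Ioo (0:ℝ) 1,
      pt x hx < p → P x ∉ F.1} := by
    ext F
    constructor
    · rintro ⟨q, hq, rfl⟩ x hx hxp hmem
      rw [hf q] at hmem
      have := (mem_UF_P_iff hQdense hP h𝔄 q hx).1 hmem
      exact absurd (le_trans hq this) (not_le.2 hxp)
    · intro hF
      obtain ⟨q, hq⟩ := UF_surjective hQdense hP h𝔄 F.2
      refine ⟨q, ?_, Subtype.ext ((hf q).trans hq)⟩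
      by_contra hpq
      obtain ⟨x, hx, h1, h2⟩ := exists_pt_between (not_le.1 hpq)
      refine hF x hx h2 ?_
      rw [← hq]
      exact (mem_UF_P_iff hQdense hP h𝔄 q hx).2 h1
  have heq : {F : StoneSpaceOfAlg 𝔄 | ∀ x : ℝ, ∀ hx : x ∈ Ioo (0:ℝ) 1,
      pt x hx < p → P x ∉ F.1} = ⋂ (x : ℝ), ⋂ (hx : x ∈ Ioo (0:ℝ) 1),
      ⋂ (_ : pt x hx < p), {F : StoneSpaceOfAlg 𝔄 | P x ∈ F.1}ᶜ := by
    ext F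
    simp only [mem_iInter, mem_compl_iff, mem_setOf_eq]
  rw [himg, heq]
  exact isClosed_iInter fun x => isClosed_iInter fun hx => isClosed_iInter fun _ =>
    (open_basic (h𝔄 ▸ subset_gen ⟨x, hx, rfl⟩)).isClosed_compl

end Final
end Stmt15Aux

namespace Stmt15Aux
open Set TopologicalSpace

lemma continuous_symm_da {X : Type*} [TopologicalSpace X] (e : DoubleArrow ≃ X)
    (hIic : ∀ p : DoubleArrow, IsClosed (e '' Iic p))
    (hIci : ∀ p : DoubleArrow, IsClosed (e '' Ici p)) :
    Continuous e.symm := by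
  apply continuous_generateFrom_iff.mpr
  rintro s ⟨a, rfl | rfl⟩
  · rw [← Equiv.image_eq_preimage_symm,
      show Ioi a = (Iic a)ᶜ from compl_Iic.symm,
      image_compl_eq e.bijective]
    exact (hIic a).isOpen_compl
  · rw [← Equiv.image_eq_preimage_symm,
      show Iio a = (Ici a)ᶜ from compl_Ici.symm,
      image_compl_eq e.bijective]
    exact (hIci a).isOpen_compl

end Stmt15Aux

open Stmt15Aux

/-- The Stone space of the algebra generated by the chain `{P x : x ∈ (0,1)}` is
homeomorphic to the double arrow space, via the map sending `(y,0)` to the ultrafilter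
`F` with `I(F) = [y,1)` and `(y,1)` to the ultrafilter with `I(F) = (y,1)`. -/
theorem stmt15 (Q : Set ℝ) (hQc : Q.Countable) (hQsub : Q ⊆ Ioo (0:ℝ) 1)
    (hQdense : ∀ a b : ℝ, 0 ≤ a → a < b → b ≤ 1 → ∃ q ∈ Q, a < q ∧ q < b)
    (P : ℝ → Set ↥Q) (hP : ∀ x : ℝ, P x = {q : ↥Q | (q : ℝ) ≤ x})
    (𝔄 : Set (Set ↥Q)) (h𝔄 : 𝔄 = genBoolAlg {s | ∃ x ∈ Ioo (0:ℝ) 1, s = P x}) :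
    ∃ h : DoubleArrow ≃ₜ StoneSpaceOfAlg 𝔄, ∀ p : DoubleArrow,
      {x ∈ Ioo (0:ℝ) 1 | P x ∈ (h p).1} =
        (if (ofLex p.1).2 = false then Ico ((ofLex p.1).1) 1
         else Ioo ((ofLex p.1).1) 1) ∩ Ioo 0 1 := by
  have hbij : Function.Bijective (fun p : DoubleArrow =>
      (⟨UF Q 𝔄 p, UF_ultra hQdense hP h𝔄 p⟩ : StoneSpaceOfAlg 𝔄)) := by
    constructor
    · intro p q h
      exact UF_injective hQdense hP h𝔄 (congrArg Subtype.val h)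
    · rintro ⟨F, hF⟩
      obtain ⟨p, hp⟩ := UF_surjective hQdense hP h𝔄 hF
      exact ⟨p, Subtype.ext hp⟩
  let e : DoubleArrow ≃ StoneSpaceOfAlg 𝔄 := Equiv.ofBijective _ hbij
  have hf : ∀ p, (e p).1 = UF Q 𝔄 p := fun _ => rfl
  have hc1 : Continuous e := cont_f hQdense hP h𝔄 hf
  have hc2 : Continuous e.symm := continuous_symm_da e
    (fun p => image_Iic_closed hQdense hP h𝔄 hf p)
    (fun p => image_Ici_closed hQdense hP h𝔄 hf p)
  refine ⟨⟨e, hc1, hc2⟩, fun p => ?_⟩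
  exact trace_UF hQdense hP h𝔄 p
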